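/- For every integer m ≥ 3 and every positive integer n, there exists a finite sequence a of positive integers such that R'(a) = T(n); that is, a tight T(n)-universal m-gonal form exists for every pair (m, n). -/

import Mathlib

/-- `s` is a generalized `m`-gonal number, i.e. `s = ((m-2)u^2 - (m-4)u)/2` for some `u ∈ ℤ`. -/
def IsGP (m s : ℤ) : Prop := ∃ u : ℤ, 2 * s = (m - 2) * u ^ 2 - (m - 4) * u

/-- `R'(a)`: the set of nonzero integers represented by the `m`-gonal form with
coefficient sequence `a`, i.e. expressible as `a₁s₁ + ⋯ + aₖsₖ` with each `sᵢ ∈ GP_m`. -/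
def Rset (m : ℤ) (a : List ℤ) : Set ℤ :=
  {x | x ≠ 0 ∧ ∃ s : List ℤ, s.length = a.length ∧ (∀ y ∈ s, IsGP m y) ∧
      x = (List.zipWith (· * ·) a s).sum}

/-- Representability without the nonzero condition. -/
def RepBy (m : ℤ) (a : List ℤ) (x : ℤ) : Prop :=
  ∃ s : List ℤ, s.length = a.length ∧ (∀ y ∈ s, IsGP m y) ∧
      x = (List.zipWith (· * ·) a s).sum

lemma isGP_zero (m : ℤ) : IsGP m 0 := ⟨0, by ring⟩

lemma isGP_one (m : ℤ) : IsGP m 1 := ⟨1, by ring⟩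

lemma isGP_nonneg {m y : ℤ} (hm : 3 ≤ m) (h : IsGP m y) : 0 ≤ y := by
  obtain ⟨u, hu⟩ := h
  rcases lt_trichotomy u 0 with h' | h' | h'
  · nlinarith [mul_nonneg (by linarith : (0:ℤ) ≤ -u)
      (by nlinarith : (0:ℤ) ≤ (m - 4) - (m - 2) * u)]
  · subst h'; nlinarith
  · nlinarith [mul_nonneg (by linarith : (0:ℤ) ≤ u)
      (by nlinarith : (0:ℤ) ≤ (m - 2) * u - (m - 4))]

lemma repBy_nil (m : ℤ) : RepBy m [] 0 := ⟨[], rfl, by simp, by simp⟩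

lemma repBy_append {m x y : ℤ} {a b : List ℤ} (hx : RepBy m a x) (hy : RepBy m b y) :
    RepBy m (a ++ b) (x + y) := by
  obtain ⟨s1, hl1, hg1, hs1⟩ := hx
  obtain ⟨s2, hl2, hg2, hs2⟩ := hy
  refine ⟨s1 ++ s2, by simp [hl1, hl2], ?_, ?_⟩
  · intro z hz
    rcases List.mem_append.1 hz with h | h
    · exact hg1 z h
    · exact hg2 z h
  · rw [List.zipWith_append hl1.symm, List.sum_append, hs1, hs2]

lemma repBy_single {m c s : ℤ} (h : IsGP m s) : RepBy m [c] (c * s) :=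
  ⟨[s], rfl, by simpa using h, by simp⟩

lemma repBy_zero (m : ℤ) (a : List ℤ) : RepBy m a 0 := by
  induction a with
  | nil => exact repBy_nil m
  | cons c a ih =>
      have := repBy_append (repBy_single (isGP_zero m) (c := c)) ih
      simpa using this

lemma repBy_mem {m c : ℤ} {a : List ℤ} (h : c ∈ a) : RepBy m a c := by
  induction a with
  | nil => simp at h
  | cons c' a ih =>
      rcases List.mem_cons.1 h with h | h
      · subst h
        have := repBy_append (repBy_single (isGP_one m) (c := c)) (repBy_zero m a)
        simpa using this
      · have := repBy_append (repBy_single (isGP_zero m) (c := c')) (ih h)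
        simpa using this

lemma repBy_replicate {m c : ℤ} (k : ℕ) (j : ℤ) (h0 : 0 ≤ j) (hk : j ≤ (k : ℤ)) :
    RepBy m (List.replicate k c) (c * j) := by
  induction k generalizing j with
  | zero =>
      have : j = 0 := by omega
      subst this
      simpa using repBy_nil m
  | succ k ih =>
      rcases eq_or_lt_of_le h0 with h | h
      · rw [← h]; simpa using repBy_zero m _
      · have h1 : j - 1 ≤ (k : ℤ) := by push_cast at hk ⊢; omega
        have := repBy_append (repBy_single (isGP_one m) (c := c)) (ih (j - 1) (by omega) h1)
        rw [List.replicate_succ]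
        have heq : c * 1 + c * (j - 1) = c * j := by ring
        rw [heq] at this
        simpa using this

lemma repBy_pair (m c : ℤ) (u : ℤ) : RepBy m [c, c] (c * ((m - 2) * u ^ 2)) := by
  obtain ⟨t1, ht1⟩ := Int.even_mul_succ_self (u - 1)
  obtain ⟨t2, ht2⟩ := Int.even_mul_succ_self u
  have hg1 : IsGP m ((m - 2) * t1 + u) := ⟨u, by linear_combination (2 - m) * ht1⟩
  have hg2 : IsGP m ((m - 2) * t2 - u) := ⟨-u, by linear_combination (2 - m) * ht2⟩
  have := repBy_append (repBy_single hg1 (c := c)) (repBy_single hg2 (c := c))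
  have heq : c * ((m - 2) * t1 + u) + c * ((m - 2) * t2 - u) = c * ((m - 2) * u ^ 2) := by
    have h3 : t1 + t2 = u ^ 2 := by nlinarith [ht1, ht2]
    linear_combination c * (m - 2) * h3
  rw [heq] at this
  simpa using this

lemma repBy_block (m c : ℤ) (p q r s : ℤ) :
    RepBy m (List.replicate 8 c) (c * ((m - 2) * (p ^ 2 + q ^ 2 + r ^ 2 + s ^ 2))) := by
  have h := repBy_append (repBy_pair m c p)
    (repBy_append (repBy_pair m c q) (repBy_append (repBy_pair m c r) (repBy_pair m c s)))
  have hl : ([c, c] ++ ([c, c] ++ ([c, c] ++ [c, c]))) = List.replicate 8 c := by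
    simp [List.replicate]
  rw [hl] at h
  have heq : c * ((m - 2) * p ^ 2) + (c * ((m - 2) * q ^ 2) + (c * ((m - 2) * r ^ 2) +
      c * ((m - 2) * s ^ 2))) = c * ((m - 2) * (p ^ 2 + q ^ 2 + r ^ 2 + s ^ 2)) := by ring
  rwa [heq] at h

lemma sum_lower {m n : ℤ} (hm : 3 ≤ m) (hn : 1 ≤ n) :
    ∀ a s : List ℤ, (∀ c ∈ a, n ≤ c) → (∀ y ∈ s, IsGP m y) →
      0 ≤ (List.zipWith (· * ·) a s).sum ∧
      ((List.zipWith (· * ·) a s).sum ≠ 0 → n ≤ (List.zipWith (· * ·) a s).sum) := by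
  intro a
  induction a with
  | nil => intro s _ _; simp
  | cons c a ih =>
      intro s ha hs
      cases s with
      | nil => simp
      | cons y s =>
          have hc : n ≤ c := ha c (by simp)
          have hy : 0 ≤ y := isGP_nonneg hm (hs y (by simp))
          obtain ⟨ih0, ih1⟩ := ih s (fun c' hc' => ha c' (by simp [hc']))
            (fun y' hy' => hs y' (by simp [hy']))
          simp only [List.zipWith_cons_cons, List.sum_cons]
          have hcy : 0 ≤ c * y := mul_nonneg (by linarith) hy
          constructor
          · linarith
          · intro hne
            by_cases h0 : y = 0
            · subst h0
              simp only [mul_zero, zero_add] at hne ⊢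
              linarith [ih1 hne]
            · have h1 : 1 ≤ y := by omega
              nlinarith

/-- For every integer `m ≥ 3` and every positive integer `n`, there exists a finite sequence
of positive integers `a` with `R'(a) = T(n)`, i.e. a tight `T(n)`-universal `m`-gonal form. -/
theorem tight_universal_exists (m n : ℤ) (hm : 3 ≤ m) (hn : 1 ≤ n) :
    ∃ a : List ℤ, (∀ x ∈ a, 0 < x) ∧ Rset m a = Set.Ici n := by
  set D : ℕ := (m - 2).toNat with hD
  have hDpos : 1 ≤ D := by omega
  have hDcast : (D : ℤ) = m - 2 := by omega
  set singles : List ℤ := (List.range n.toNat).map (fun r : ℕ => n + (r : ℤ)) with hsingles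
  set a : List ℤ := singles ++ (List.replicate (D - 1) n ++ List.replicate 8 n) with ha
  have hmem : ∀ c ∈ a, n ≤ c := by
    intro c hc
    rw [ha] at hc
    rcases List.mem_append.1 hc with h | h
    · rw [hsingles] at h
      obtain ⟨r, _, hr⟩ := List.mem_map.1 h
      have : (0:ℤ) ≤ (r : ℤ) := Int.natCast_nonneg r
      omega
    · rcases List.mem_append.1 h with h | h
      · have := List.eq_of_mem_replicate h; omega
      · have := List.eq_of_mem_replicate h; omega
  refine ⟨a, fun x hx => by linarith [hmem x hx], ?_⟩
  ext x
  simp only [Rset, Set.mem_setOf_eq, Set.mem_Ici]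
  constructor
  · rintro ⟨hne, s, hl, hg, hsum⟩
    obtain ⟨_, h1⟩ := sum_lower hm hn a s hmem hg
    rw [hsum]
    exact h1 (by rw [← hsum]; exact hne)
  · intro hx
    refine ⟨by omega, ?_⟩
    -- decompose x
    obtain ⟨q, r, hdm, hr0, hrn⟩ : ∃ q r : ℤ, n * q + r = x ∧ 0 ≤ r ∧ r < n :=
      ⟨x / n, x % n, Int.mul_ediv_add_emod x n, Int.emod_nonneg x (by omega),
        Int.emod_lt_of_pos x (by omega)⟩
    have hq1 : 1 ≤ q := by
      by_contra h
      push_neg at h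
      have hq0 : q ≤ 0 := by omega
      have : n * q ≤ 0 := mul_nonpos_of_nonneg_of_nonpos (by omega) hq0
      linarith
    obtain ⟨M', j, hdm2, hj0, hjd⟩ : ∃ M' j : ℤ, (m - 2) * M' + j = q - 1 ∧ 0 ≤ j ∧ j < m - 2 :=
      ⟨(q - 1) / (m - 2), (q - 1) % (m - 2), Int.mul_ediv_add_emod (q - 1) (m - 2),
        Int.emod_nonneg (q - 1) (by omega), Int.emod_lt_of_pos (q - 1) (by omega)⟩
    have hM'0 : 0 ≤ M' := by
      by_contra h
      push_neg at h
      have h1 : M' ≤ -1 := by omega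
      have h2 : (m - 2) * M' ≤ (m - 2) * (-1) :=
        mul_le_mul_of_nonneg_left h1 (by omega)
      linarith
    obtain ⟨A, B, C, E, hABCE⟩ := Nat.sum_four_squares M'.toNat
    have hABCE' : (A : ℤ) ^ 2 + (B : ℤ) ^ 2 + (C : ℤ) ^ 2 + (E : ℤ) ^ 2 = M' := by
      have := congrArg (fun k : ℕ => (k : ℤ)) hABCE
      push_cast at this
      rw [this, Int.toNat_of_nonneg hM'0]
    -- the three pieces
    have hpiece1 : RepBy m singles (n + r) := by
      apply repBy_mem
      rw [hsingles]
      apply List.mem_map.2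
      refine ⟨r.toNat, List.mem_range.2 (by omega), by rw [Int.toNat_of_nonneg hr0]⟩
    have hpiece2 : RepBy m (List.replicate (D - 1) n) (n * j) :=
      repBy_replicate (D - 1) j hj0 (by omega)
    have hpiece3 : RepBy m (List.replicate 8 n)
        (n * ((m - 2) * ((A:ℤ) ^ 2 + (B:ℤ) ^ 2 + (C:ℤ) ^ 2 + (E:ℤ) ^ 2))) :=
      repBy_block m n A B C E
    have htot := repBy_append hpiece1 (repBy_append hpiece2 hpiece3)
    have hxeq : x = (n + r) + (n * j + n * ((m - 2) *
        ((A:ℤ) ^ 2 + (B:ℤ) ^ 2 + (C:ℤ) ^ 2 + (E:ℤ) ^ 2))) := by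
      rw [hABCE']
      linear_combination -hdm - n * hdm2
    rw [← ha] at htot
    rw [hxeq]
    exact htot
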